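/- Let q⋆ be an optimal k-points NN quantizer for P with codebook c⋆ = {c⋆₁,…,c⋆_k} and let q be any k-points NN quantizer. Then 𝐅(q⋆,q)² ≤ F₁(q⋆,q)² + p⋆(F₁(q⋆,q))·(M + F₁(q⋆,q))², where M = max_{i≠j} |c⋆_i − c⋆_j|. -/

import Mathlib

open MeasureTheory Metric Set ENNReal

open scoped RealInnerProductSpace

noncomputable section

variable {E : Type*} [NormedAddCommGroup E] [InnerProductSpace ℝ E] [MeasurableSpace E]

/-- A `k`-points nearest-neighbor quantizer: a Borel-measurable map whose image is a set of
exactly `k` points and which maps every point to a nearest point of its codebook. -/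
def IsNNQuantizer (k : ℕ) (q : E → E) : Prop :=
  Measurable q ∧ (∃ s : Finset E, s.card = k ∧ Set.range q = ↑s) ∧
    ∀ x : E, ∀ c ∈ Set.range q, ‖x - q x‖ ≤ ‖x - c‖

/-- The risk (distortion) of a quantizer with respect to `P`. -/
def risk (P : Measure E) (q : E → E) : ℝ := ∫ x, ‖x - q x‖ ^ 2 ∂P

/-- An optimal `k`-points NN quantizer for `P`. -/
def IsOptimalQuantizer (P : Measure E) (k : ℕ) (q : E → E) : Prop :=
  IsNNQuantizer k q ∧ ∀ q', IsNNQuantizer k q' → risk P q ≤ risk P q'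

/-- The absolute margin condition with parameter `l0` (with respect to the optimal quantizer
`qs`):  (1) the set `A(l0)` has full `P`-measure; (2) for every random variable `Y`
(encoded by a coupling `π` of the law `P` of `X` and the law of `Y`) with
`E|X - Y|² ≤ l0² E|X - qs X|²`, the map `q ↦ E|Y - q Y|²` over `k`-points NN quantizers has a
unique minimizer (uniqueness of its codebook). -/
def AbsoluteMargin (P : Measure E) (k : ℕ) (qs : E → E) (l0 : ℝ) : Prop :=
  P {x | qs (x + l0 • (x - qs x)) = qs x} = 1 ∧
  ∀ π : Measure (E × E), IsProbabilityMeasure π → π.map Prod.fst = P →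
    (∫ p, ‖p.1 - p.2‖ ^ 2 ∂π) ≤ l0 ^ 2 * ∫ x, ‖x - qs x‖ ^ 2 ∂P →
    ∃ q0, IsNNQuantizer k q0 ∧
      (∀ q', IsNNQuantizer k q' → risk (π.map Prod.snd) q0 ≤ risk (π.map Prod.snd) q') ∧
      ∀ q', IsNNQuantizer k q' →
        (∀ q'', IsNNQuantizer k q'' → risk (π.map Prod.snd) q' ≤ risk (π.map Prod.snd) q'') →
        Set.range q' = Set.range q0

/-- Voronoi cell of the `j`-th point of the codebook `c`. -/
def Vcell (k : ℕ) (c : Fin k → E) (j : Fin k) : Set E := {x | ∀ l, ‖x - c j‖ ≤ ‖x - c l‖}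

/-- The frontier of the Voronoi diagram generated by `c`. -/
def VorFrontier (k : ℕ) (c : Fin k → E) : Set E :=
  ⋃ (i) (j) (_ : i ≠ j), Vcell k c i ∩ Vcell k c j

/-- `F₁` between two codebooks: min over permutations of the max distance of matched centers. -/
def F1 (k : ℕ) (c c' : Fin k → E) : ℝ :=
  ⨅ σ : Equiv.Perm (Fin k), ⨆ j, ‖c j - c' (σ j)‖

/-- `F₂` between two codebooks: the minimal `P`-mass of misclassified points. -/
def F2 (P : Measure E) (k : ℕ) (c c' : Fin k → E) : ℝ :=
  ⨅ σ : Equiv.Perm (Fin k), (P (⋃ j, Vcell k c j ∩ Vcell k c' (σ j))ᶜ).toReal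

/-- `max_{i ≠ j} ‖c i - c j‖`. -/
def maxDist (k : ℕ) (c : Fin k → E) : ℝ :=
  ⨆ p : {p : Fin k × Fin k // p.1 ≠ p.2}, ‖c p.1.1 - c p.1.2‖

/-- `min_{i ≠ j} ‖c i - c j‖`. -/
def minDist (k : ℕ) (c : Fin k → E) : ℝ :=
  ⨅ p : {p : Fin k × Fin k // p.1 ≠ p.2}, ‖c p.1.1 - c p.1.2‖

/-- The function `p⋆(t)` of Definition `def:pstar`, for the optimal codebook `cs` of the
optimal quantizer `qs`. -/
def pstar (P : Measure E) (k : ℕ) (cs : Fin k → E) (qs : E → E) (t : ℝ) : ℝ :=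
  (P (⋃ i, {x | minDist k cs * infDist x (frontier (Vcell k cs i)) ≤
      2 * ‖x - qs x‖ * t + 2 * t ^ 2})).toReal

/-- `F₁` between two quantizers, defined through enumerations of their codebooks. -/
def F1Q (k : ℕ) (q q' : E → E) : ℝ :=
  sInf {r | ∃ c c' : Fin k → E, Set.range c = Set.range q ∧ Set.range c' = Set.range q' ∧
    r = ⨆ j, ‖c j - c' j‖}

lemma vcell_isClosed (k : ℕ) (cs : Fin k → E) (i : Fin k) : IsClosed (Vcell k cs i) := by
  have h : Vcell k cs i = ⋂ l, {x : E | ‖x - cs i‖ ≤ ‖x - cs l‖} := by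
    ext x; simp [Vcell, Set.mem_iInter]
  rw [h]
  exact isClosed_iInter fun l => isClosed_le (by fun_prop) (by fun_prop)

lemma exists_frontier_point {S : Set E} (hS : IsClosed S) {x p : E}
    (hx : x ∈ S) (hp : p ∈ closure Sᶜ) :
    ∃ z ∈ frontier S, dist x z ≤ dist x p := by
  by_cases hpS : p ∈ S
  · exact ⟨p, by rw [frontier_eq_closure_inter_closure, hS.closure_eq]; exact ⟨hpS, hp⟩, le_rfl⟩
  · set f : ℝ → E := fun θ => x + θ • (p - x) with hf
    have hfc : Continuous f := by fun_prop
    set T : Set ℝ := Icc (0:ℝ) 1 ∩ f ⁻¹' S with hT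
    have hT0 : (0:ℝ) ∈ T := ⟨⟨le_rfl, zero_le_one⟩, by simp [hf, hx]⟩
    have hTclosed : IsClosed T := isClosed_Icc.inter (hS.preimage hfc)
    have hTbdd : BddAbove T := BddAbove.mono Set.inter_subset_left bddAbove_Icc
    set θ := sSup T with hθ
    have hθT : θ ∈ T := hTclosed.csSup_mem ⟨0, hT0⟩ hTbdd
    have hθ0 : 0 ≤ θ := hθT.1.1
    have hθ1 : θ < 1 := by
      rcases lt_or_eq_of_le hθT.1.2 with h | h
      · exact h
      · exfalso
        apply hpS
        have hf1 : f 1 = p := by simp [hf]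
        rw [← hf1]
        have := hθT.2
        rwa [h] at this
    have hz : f θ ∈ closure Sᶜ := by
      refine mem_closure_of_tendsto (f := f) (b := nhdsWithin θ (Set.Ioi θ))
        ((hfc.tendsto θ).mono_left nhdsWithin_le_nhds) ?_
      filter_upwards [Ioc_mem_nhdsGT_of_mem ⟨le_rfl, hθ1⟩] with r hr
      intro hrS
      exact absurd (le_csSup hTbdd ⟨⟨hθ0.trans hr.1.le, hr.2⟩, hrS⟩) (not_le.2 hr.1)
    refine ⟨f θ, ?_, ?_⟩
    · rw [frontier_eq_closure_inter_closure, hS.closure_eq]; exact ⟨hθT.2, hz⟩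
    · have hdxf : dist x (f θ) = θ * dist x p := by
        rw [dist_eq_norm, dist_eq_norm, hf]
        have h1 : x - (x + θ • (p - x)) = θ • (x - p) := by
          rw [smul_sub, smul_sub]; abel
        rw [h1, norm_smul, Real.norm_eq_abs, abs_of_nonneg hθ0, norm_sub_rev]
      rw [hdxf]
      calc θ * dist x p ≤ 1 * dist x p :=
            mul_le_mul_of_nonneg_right hθ1.le dist_nonneg
        _ = dist x p := one_mul _

lemma key_geom {k : ℕ} (cs : Fin k → E) (i j : Fin k) (hne : cs i ≠ cs j)
    {x : E} (hx : x ∈ Vcell k cs i) :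
    2 * ‖cs i - cs j‖ * infDist x (frontier (Vcell k cs i)) ≤
      ‖x - cs j‖ ^ 2 - ‖x - cs i‖ ^ 2 := by
  set a := cs i with ha
  set b := cs j with hb
  set d : ℝ := ‖b - a‖ with hd
  have hd0 : 0 < d := by
    rw [hd, norm_pos_iff, sub_ne_zero]
    exact Ne.symm hne
  set u : E := d⁻¹ • (b - a) with hu
  have hxa : ‖x - a‖ ≤ ‖x - b‖ := hx j
  set s : ℝ := (‖x - b‖ ^ 2 - ‖x - a‖ ^ 2) / (2 * d) with hs
  have hs0 : 0 ≤ s := by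
    apply div_nonneg _ (by linarith)
    nlinarith [norm_nonneg (x - a), norm_nonneg (x - b)]
  have hkey : ∀ r : ℝ, ‖x + r • u - a‖ ^ 2 - ‖x + r • u - b‖ ^ 2
      = (‖x - a‖ ^ 2 - ‖x - b‖ ^ 2) + 2 * (r * d) := by
    intro r
    have e1 : x + r • u - a = (x - a) + r • u := by abel
    have e2 : x + r • u - b = (x - b) + r • u := by abel
    rw [e1, e2, @norm_add_sq_real, @norm_add_sq_real]
    have hi : @inner ℝ E _ (x - a) (r • u) - @inner ℝ E _ (x - b) (r • u) = r * d := by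
      rw [← inner_sub_left]
      have h3 : x - a - (x - b) = b - a := by abel
      rw [h3, hu, real_inner_smul_right, real_inner_smul_right, real_inner_self_eq_norm_sq, ← hd]
      field_simp
    linarith [hi]
  set p := x + s • u with hp
  have hpc : p ∈ closure (Vcell k cs i)ᶜ := by
    refine mem_closure_of_tendsto (f := fun ε : ℝ => x + (s + ε) • u)
      (b := nhdsWithin 0 (Set.Ioi (0:ℝ))) ?_ ?_
    · have hc : Continuous fun ε : ℝ => x + (s + ε) • u := by fun_prop
      have h : Filter.Tendsto (fun ε : ℝ => x + (s + ε) • u)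
          (nhdsWithin 0 (Set.Ioi (0:ℝ))) (nhds (x + (s + 0) • u)) :=
        (hc.tendsto 0).mono_left nhdsWithin_le_nhds
      simpa [hp] using h
    · filter_upwards [self_mem_nhdsWithin] with ε hε
      rw [Set.mem_Ioi] at hε
      intro hmem
      have h1 := hkey (s + ε)
      have h2 : 2 * (s * d) = ‖x - b‖ ^ 2 - ‖x - a‖ ^ 2 := by
        rw [hs]; field_simp
      have h3 : ‖x + (s + ε) • u - a‖ ≤ ‖x + (s + ε) • u - b‖ := hmem j
      have h4 : ‖x + (s + ε) • u - a‖ ^ 2 ≤ ‖x + (s + ε) • u - b‖ ^ 2 :=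
        pow_le_pow_left₀ (norm_nonneg _) h3 2
      have h5 : 0 < ε * d := mul_pos hε hd0
      nlinarith
  obtain ⟨z, hzf, hzd⟩ := exists_frontier_point (vcell_isClosed k cs i) hx hpc
  have hun : ‖u‖ = 1 := by
    rw [hu, norm_smul, Real.norm_eq_abs, abs_of_nonneg (inv_nonneg.2 hd0.le), ← hd,
      inv_mul_cancel₀ hd0.ne']
  have hdxp : dist x p = s := by
    rw [hp, dist_eq_norm]
    have h1 : x - (x + s • u) = (-s) • u := by
      rw [neg_smul]; abel
    rw [h1, norm_smul, Real.norm_eq_abs, abs_neg, abs_of_nonneg hs0, hun, mul_one]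
  have hinf : infDist x (frontier (Vcell k cs i)) ≤ s := by
    calc infDist x (frontier (Vcell k cs i)) ≤ dist x z := infDist_le_dist_of_mem hzf
      _ ≤ dist x p := hzd
      _ = s := hdxp
  have hrw : ‖a - b‖ = d := by rw [hd, norm_sub_rev]
  rw [hrw]
  have h6 : 2 * d * infDist x (frontier (Vcell k cs i)) ≤ 2 * d * s :=
    mul_le_mul_of_nonneg_left hinf (by linarith)
  have h7 : 2 * d * s = ‖x - b‖ ^ 2 - ‖x - a‖ ^ 2 := by
    rw [hs]; field_simp
  linarith

/-- comparison of `𝐅` with `F₁` via `p⋆` (Proposition `thm:pstar`). -/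
theorem stmt2 [BorelSpace E] [CompleteSpace E] [SecondCountableTopology E]
    (P : Measure E) [IsProbabilityMeasure P] (k : ℕ) (hk : 1 ≤ k)
    (hmom : Integrable (fun x => ‖x‖ ^ 2) P)
    (hsupp : ∀ s : Finset E, s.card ≤ k → P (↑s : Set E) < 1)
    (qs q : E → E) (cs c : Fin k → E)
    (hcs_inj : Function.Injective cs) (hc_inj : Function.Injective c)
    (hcs_range : Set.range qs = Set.range cs) (hc_range : Set.range q = Set.range c)
    (hqs : IsOptimalQuantizer P k qs) (hq : IsNNQuantizer k q) :
    ∫ x, ‖q x - qs x‖ ^ 2 ∂P ≤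
      F1 k cs c ^ 2 + pstar P k cs qs (F1 k cs c) * (maxDist k cs + F1 k cs c) ^ 2 := by
  haveI : Nonempty (Fin k) := Fin.pos_iff_nonempty.mp hk
  obtain ⟨hqs_nn_full, -⟩ := hqs
  obtain ⟨hqs_meas, -, hqs_nn⟩ := hqs_nn_full
  obtain ⟨hq_meas, -, hq_nn⟩ := hq
  set t := F1 k cs c with htdef
  set M := maxDist k cs with hMdef
  have hsup_nonneg : ∀ σ : Equiv.Perm (Fin k), 0 ≤ ⨆ j, ‖cs j - c (σ j)‖ := fun σ =>
    le_ciSup_of_le (Finite.bddAbove_range _) (Classical.arbitrary _) (norm_nonneg _)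
  have ht0 : 0 ≤ t := le_ciInf hsup_nonneg
  obtain ⟨σ, hσ⟩ := Finite.exists_min (fun σ : Equiv.Perm (Fin k) => ⨆ j, ‖cs j - c (σ j)‖)
  have hσt : ∀ j, ‖cs j - c (σ j)‖ ≤ t := by
    intro j
    have h1 : (⨆ j, ‖cs j - c (σ j)‖) ≤ t := le_ciInf hσ
    exact le_trans (le_ciSup (f := fun j => ‖cs j - c (σ j)‖) (Finite.bddAbove_range _) j) h1
  have hMd : ∀ i j : Fin k, i ≠ j → ‖cs i - cs j‖ ≤ M := fun i j hij =>
    le_ciSup (f := fun p : {p : Fin k × Fin k // p.1 ≠ p.2} => ‖cs p.1.1 - cs p.1.2‖)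
      (Finite.bddAbove_range _) (⟨(i, j), hij⟩ : {p : Fin k × Fin k // p.1 ≠ p.2})
  have hM0 : 0 ≤ M := by
    by_cases h2 : 2 ≤ k
    · have hne : (⟨0, by omega⟩ : Fin k) ≠ ⟨1, by omega⟩ := by simp [Fin.ext_iff]
      exact (norm_nonneg _).trans (hMd _ _ hne)
    · have hk1 : k = 1 := by omega
      subst hk1
      haveI : IsEmpty {p : Fin 1 × Fin 1 // p.1 ≠ p.2} :=
        ⟨fun ⟨⟨a, b⟩, h⟩ => h (Subsingleton.elim a b)⟩
      rw [hMdef, maxDist, Real.iSup_of_isEmpty]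
  have hmind : ∀ i j : Fin k, i ≠ j → minDist k cs ≤ ‖cs i - cs j‖ := fun i j hij =>
    ciInf_le (f := fun p : {p : Fin k × Fin k // p.1 ≠ p.2} => ‖cs p.1.1 - cs p.1.2‖)
      ⟨0, by rintro - ⟨p, rfl⟩; exact norm_nonneg _⟩
      (⟨(i, j), hij⟩ : {p : Fin k × Fin k // p.1 ≠ p.2})
  set B : Set E := ⋃ i, {x | minDist k cs * infDist x (frontier (Vcell k cs i)) ≤
      2 * ‖x - qs x‖ * t + 2 * t ^ 2} with hB
  have hBmeas : MeasurableSet B := by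
    apply MeasurableSet.iUnion
    intro i
    apply measurableSet_le
    · exact (continuous_const.mul (continuous_infDist_pt _)).measurable
    · exact ((measurable_const.mul (measurable_id.sub hqs_meas).norm).mul
        measurable_const).add measurable_const
  have hqx : ∀ x : E, ∃ i, qs x = cs i ∧ x ∈ Vcell k cs i := by
    intro x
    have hmem : qs x ∈ Set.range cs := by rw [← hcs_range]; exact Set.mem_range_self x
    obtain ⟨i, hi⟩ := hmem
    refine ⟨i, hi.symm, fun l => ?_⟩
    have hl : cs l ∈ Set.range qs := by rw [hcs_range]; exact Set.mem_range_self l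
    calc ‖x - cs i‖ = ‖x - qs x‖ := by rw [hi]
      _ ≤ ‖x - cs l‖ := hqs_nn x (cs l) hl
  have htri : ∀ a b c' : E, ‖a - c'‖ ≤ ‖a - b‖ + ‖b - c'‖ := fun a b c' => by
    simpa [dist_eq_norm] using dist_triangle a b c'
  have hglob : ∀ x : E, ‖q x - qs x‖ ≤ M + t := by
    intro x
    obtain ⟨i, hqsx, -⟩ := hqx x
    have hmem : q x ∈ Set.range c := by rw [← hc_range]; exact Set.mem_range_self x
    obtain ⟨l, hl⟩ := hmem
    have hl' : c (σ (σ.symm l)) = q x := by rw [Equiv.apply_symm_apply]; exact hl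
    set j' := σ.symm l with hj'
    have h1 : ‖c (σ j') - cs j'‖ ≤ t := by rw [norm_sub_rev]; exact hσt j'
    have h2 : ‖cs j' - cs i‖ ≤ M := by
      by_cases hji : j' = i
      · rw [hji]; simpa using hM0
      · exact hMd _ _ hji
    calc ‖q x - qs x‖ = ‖c (σ j') - cs i‖ := by rw [hl', hqsx]
      _ ≤ ‖c (σ j') - cs j'‖ + ‖cs j' - cs i‖ := htri _ _ _
      _ ≤ M + t := by linarith
  have hgood : ∀ x ∉ B, ‖q x - qs x‖ ≤ t := by
    intro x hxB
    obtain ⟨i, hqsx, hxV⟩ := hqx x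
    have hxi : 2 * ‖x - qs x‖ * t + 2 * t ^ 2 <
        minDist k cs * infDist x (frontier (Vcell k cs i)) := by
      simp only [hB, Set.mem_iUnion, Set.mem_setOf_eq, not_exists, not_le] at hxB
      exact hxB i
    rw [hqsx] at hxi
    have hfar : ∀ j, j ≠ i → ‖x - cs i‖ + 2 * t < ‖x - cs j‖ := by
      intro j hji
      have hcsne : cs i ≠ cs j := fun h => hji (hcs_inj h).symm
      have hgeo := key_geom cs i j hcsne hxV
      have hmin := hmind i j (fun h => hji h.symm)
      have hinf0 : 0 ≤ infDist x (frontier (Vcell k cs i)) := infDist_nonneg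
      have hmul : minDist k cs * infDist x (frontier (Vcell k cs i)) ≤
          ‖cs i - cs j‖ * infDist x (frontier (Vcell k cs i)) :=
        mul_le_mul_of_nonneg_right hmin hinf0
      have hsq : (‖x - cs i‖ + 2 * t) ^ 2 < ‖x - cs j‖ ^ 2 := by nlinarith
      have := lt_of_pow_lt_pow_left₀ 2 (norm_nonneg (x - cs j)) hsq
      linarith
    have hqeq : q x = c (σ i) := by
      have hmem : q x ∈ Set.range c := by rw [← hc_range]; exact Set.mem_range_self x
      obtain ⟨l, hl⟩ := hmem
      have hl' : c (σ (σ.symm l)) = q x := by rw [Equiv.apply_symm_apply]; exact hl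
      set j' := σ.symm l with hj'
      by_cases hji : j' = i
      · rw [← hl', hji]
      · exfalso
        have hci : c (σ i) ∈ Set.range q := by rw [hc_range]; exact Set.mem_range_self _
        have h1 : ‖x - q x‖ ≤ ‖x - c (σ i)‖ := hq_nn x (c (σ i)) hci
        have h2 : ‖x - c (σ i)‖ ≤ ‖x - cs i‖ + ‖cs i - c (σ i)‖ := htri _ _ _
        have h3 : ‖x - cs j'‖ ≤ ‖x - c (σ j')‖ + ‖c (σ j') - cs j'‖ := htri _ _ _
        have h4 : ‖c (σ j') - cs j'‖ ≤ t := by rw [norm_sub_rev]; exact hσt j'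
        have h5 : ‖x - c (σ j')‖ = ‖x - q x‖ := by rw [hl']
        have h6 := hfar j' hji
        have h7 := hσt i
        linarith
    rw [hqeq, hqsx, norm_sub_rev]
    exact hσt i
  have hmb : Measurable fun x => ‖q x - qs x‖ ^ 2 := (hq_meas.sub hqs_meas).norm.pow_const 2
  have hint : Integrable (fun x => ‖q x - qs x‖ ^ 2) P := by
    refine ⟨hmb.aestronglyMeasurable,
      HasFiniteIntegral.of_bounded (C := (M + t) ^ 2) (ae_of_all _ fun x => ?_)⟩
    rw [Real.norm_eq_abs, abs_of_nonneg (by positivity)]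
    exact pow_le_pow_left₀ (norm_nonneg _) (hglob x) 2
  set h : E → ℝ := B.indicator (fun _ => (M + t) ^ 2) + Bᶜ.indicator (fun _ => t ^ 2) with hh
  have hint1 : Integrable (B.indicator fun _ : E => (M + t) ^ 2) P :=
    (integrable_const _).indicator hBmeas
  have hint2 : Integrable (Bᶜ.indicator fun _ : E => t ^ 2) P :=
    (integrable_const _).indicator hBmeas.compl
  have hhint : Integrable h P := hint1.add hint2
  have hle : ∀ x, ‖q x - qs x‖ ^ 2 ≤ h x := by
    intro x
    by_cases hx : x ∈ B
    · have hhx : h x = (M + t) ^ 2 := by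
        have hx' : x ∉ Bᶜ := by simpa using hx
        simp [hh, Set.indicator_of_mem hx, Set.indicator_of_notMem hx']
      rw [hhx]
      exact pow_le_pow_left₀ (norm_nonneg _) (hglob x) 2
    · have hhx : h x = t ^ 2 := by
        have hx' : x ∈ Bᶜ := by simpa using hx
        simp [hh, Set.indicator_of_notMem hx, Set.indicator_of_mem hx']
      rw [hhx]
      exact pow_le_pow_left₀ (norm_nonneg _) (hgood x hx) 2
  have hPBc : (P Bᶜ).toReal ≤ 1 := by
    have h1 : P Bᶜ ≤ 1 := prob_le_one
    calc (P Bᶜ).toReal ≤ (1 : ℝ≥0∞).toReal := ENNReal.toReal_mono ENNReal.one_ne_top h1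
      _ = 1 := ENNReal.toReal_one
  have hps : pstar P k cs qs t = (P B).toReal := rfl
  have hPB0 : 0 ≤ (P B).toReal := ENNReal.toReal_nonneg
  calc ∫ x, ‖q x - qs x‖ ^ 2 ∂P ≤ ∫ x, h x ∂P := integral_mono hint hhint hle
    _ = (P B).toReal * (M + t) ^ 2 + (P Bᶜ).toReal * t ^ 2 := by
        rw [hh]
        simp only [Pi.add_apply]
        rw [integral_add hint1 hint2, integral_indicator_const _ hBmeas,
          integral_indicator_const _ hBmeas.compl]
        simp [smul_eq_mul, Measure.real]
    _ ≤ t ^ 2 + pstar P k cs qs t * (M + t) ^ 2 := by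
        rw [hps]
        nlinarith [sq_nonneg t, mul_le_mul_of_nonneg_right hPBc (sq_nonneg t)]
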